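/- Let F be an odd-sunflower-free family of nonempty finite sets, and let H be a multiset of cardinality at least 2, each of whose elements is a member of F. Then H is an odd-sunflower as a multifamily if and only if there exists a set F ∈ F occurring in H with odd multiplicity such that every other set occurring in H is a subset of F and occurs in H with even multiplicity. In particular, if the cardinality of H is even, then H is not an odd-sunflower. -/

import Mathlib

variable {α : Type*}

/-- A family of at least two nonempty finite sets is an *odd-sunflower* if every element of
the union of its members is contained in an odd number of its members. -/
def IsOddSunflower [DecidableEq α] (F : Finset (Finset α)) : Prop :=
  2 ≤ F.card ∧ (∀ S ∈ F, S.Nonempty) ∧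
    ∀ x ∈ F.sup id, Odd (F.filter (fun S => x ∈ S)).card

/-- A family is *odd-sunflower-free* if no subfamily of it (necessarily with at least two
members) is an odd-sunflower. -/
def OddSunflowerFree [DecidableEq α] (F : Finset (Finset α)) : Prop :=
  ∀ H ⊆ F, ¬ IsOddSunflower H

/-- A nonempty family of nonempty finite sets is an *even-sunflower* if every element of
the union of its members is contained in an even number of its members. -/
def IsEvenSunflower [DecidableEq α] (F : Finset (Finset α)) : Prop :=
  F.Nonempty ∧ (∀ S ∈ F, S.Nonempty) ∧
    ∀ x ∈ F.sup id, Even (F.filter (fun S => x ∈ S)).card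

/-- A family is *even-sunflower-free* if no nonempty subfamily of it is an even-sunflower. -/
def EvenSunflowerFree [DecidableEq α] (F : Finset (Finset α)) : Prop :=
  ∀ H ⊆ F, ¬ IsEvenSunflower H

/-- A family of at least three sets is a *sunflower* if every element is contained either
in all of the sets or in at most one of them. -/
def IsSunflower [DecidableEq α] (H : Finset (Finset α)) : Prop :=
  3 ≤ H.card ∧ ∀ x : α, (∀ S ∈ H, x ∈ S) ∨ (H.filter (fun S => x ∈ S)).card ≤ 1

/-- A family of sets is an *antichain* if none of its members is a proper subset of another. -/
def IsAntichainFamily (F : Finset (Finset α)) : Prop :=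
  ∀ S ∈ F, ∀ T ∈ F, S ⊆ T → S = T

/-- An odd-sunflower is *minimal* if no proper subfamily of it is an odd-sunflower. -/
def IsMinimalOddSunflower [DecidableEq α] (F : Finset (Finset α)) : Prop :=
  IsOddSunflower F ∧ ∀ H ⊂ F, ¬ IsOddSunflower H

/-- `Cfam n` is the family of all `(n-1)`-element subsets of `{1, …, n}`. -/
def Cfam (n : ℕ) : Finset (Finset ℕ) := (Finset.Icc 1 n).powersetCard (n - 1)

/-- `CfamPlus n` is `Cfam n` together with the full set `{1, …, n}`. -/
def CfamPlus (n : ℕ) : Finset (Finset ℕ) := insert (Finset.Icc 1 n) (Cfam n)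

/-- A multifamily (multiset) of at least two nonempty finite sets is an *odd-sunflower* if
every element of the union of its members has odd degree (counted with multiplicity). -/
def MultiOddSunflower [DecidableEq α] (H : Multiset (Finset α)) : Prop :=
  2 ≤ Multiset.card H ∧ (∀ S ∈ H, S.Nonempty) ∧
    ∀ x ∈ H.sup, Odd (H.countP (fun S => x ∈ S))

/-- The wreath product of two families. -/
def Wreath {β : Type*} [DecidableEq α] [DecidableEq β]
    (F : Set (Finset α)) (G : Set (Finset β)) : Set (Finset (α × β)) :=
  {S | ∃ F₀ ∈ F, ∃ g : α → Finset β, (∀ i ∈ F₀, g i ∈ G) ∧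
    S = F₀.biUnion (fun i => ({i} : Finset α) ×ˢ g i)}

/-- Odd-sunflower-freeness for set-indexed families. -/
def OddSunflowerFreeS [DecidableEq α] (F : Set (Finset α)) : Prop :=
  ∀ H : Finset (Finset α), ↑H ⊆ F → ¬ IsOddSunflower H

/-- Antichain condition for set-indexed families. -/
def IsAntichainFamilyS (F : Set (Finset α)) : Prop :=
  ∀ S ∈ F, ∀ T ∈ F, S ⊆ T → S = T

private lemma mem_msup [DecidableEq α] {x : α} {H : Multiset (Finset α)} :
    x ∈ H.sup ↔ ∃ S ∈ H, x ∈ S := by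
  induction H using Multiset.induction with
  | empty => simp
  | cons a s ih => simp [Multiset.sup_cons, ih]

private lemma countP_parity [DecidableEq α] (H : Multiset (Finset α)) (p : Finset α → Prop)
    [DecidablePred p] :
    ((H.countP p : ZMod 2)) =
      ((((H.toFinset.filter fun S => Odd (H.count S)).filter p).card : ZMod 2)) := by
  have h1 : H.countP p = ∑ a ∈ H.toFinset.filter p, H.count a := by
    rw [Multiset.countP_eq_card_filter, ← Multiset.toFinset_sum_count_eq,
      Multiset.toFinset_filter]
    refine Finset.sum_congr rfl fun a ha => ?_
    rw [Multiset.count_filter, if_pos (Finset.mem_filter.mp ha).2]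
  rw [h1, Nat.cast_sum]
  have h2 : ∀ a ∈ H.toFinset.filter p, ((H.count a : ZMod 2)) =
      if Odd (H.count a) then (1 : ZMod 2) else 0 := by
    intro a _
    by_cases h : Odd (H.count a)
    · rw [if_pos h, ZMod.natCast_eq_one_iff_odd.mpr h]
    · rw [if_neg h, ZMod.natCast_eq_zero_iff_even.mpr (Nat.not_odd_iff_even.mp h)]
  rw [Finset.sum_congr rfl h2, ← Finset.sum_filter, Finset.sum_const, Finset.filter_comm,
    nsmul_eq_mul, mul_one]

/-- Lemma 3 (multifamily version): a multiset `H` of at least two members of an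
odd-sunflower-free family `F` of nonempty sets is an odd-sunflower iff it consists of an
odd number of copies of a single member `F₀ ∈ F` together with an even number of copies of
some subsets of `F₀`.  In particular, if `H` has even cardinality it is not an
odd-sunflower. -/
theorem multiOddSunflower_iff {α : Type*} [DecidableEq α]
    (F : Finset (Finset α)) (hne : ∀ S ∈ F, S.Nonempty) (hFfree : OddSunflowerFree F)
    (H : Multiset (Finset α)) (hH : ∀ S ∈ H, S ∈ F) (hcard : 2 ≤ Multiset.card H) :
    (MultiOddSunflower H ↔
      ∃ F₀ ∈ F, Odd (H.count F₀) ∧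
        ∀ S ∈ H, S ≠ F₀ → S ⊆ F₀ ∧ Even (H.count S)) ∧
    (Even (Multiset.card H) → ¬ MultiOddSunflower H) := by
  classical
  set D : Finset (Finset α) := H.toFinset.filter (fun S => Odd (H.count S)) with hDdef
  have hDsubF : D ⊆ F := fun S hS =>
    hH S (Multiset.mem_toFinset.mp (Finset.mem_filter.mp hS).1)
  have key : ∀ (p : Finset α → Prop) [DecidablePred p],
      (Odd (H.countP p) ↔ Odd ((D.filter p).card)) := by
    intro p _
    rw [← ZMod.natCast_eq_one_iff_odd, ← ZMod.natCast_eq_one_iff_odd, countP_parity]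
  have main : MultiOddSunflower H ↔ ∃ F₀ ∈ F, Odd (H.count F₀) ∧
      ∀ S ∈ H, S ≠ F₀ → S ⊆ F₀ ∧ Even (H.count S) := by
    constructor
    · rintro ⟨-, hne', hodd⟩
      have hx : ∀ x ∈ H.sup, Odd ((D.filter fun S => x ∈ S).card) :=
        fun x hx => (key _).mp (hodd x hx)
      -- D is nonempty
      have hDne : D.Nonempty := by
        obtain ⟨S0, hS0⟩ := Multiset.exists_mem_of_ne_zero
          (by rintro rfl; simp at hcard : H ≠ 0)
        obtain ⟨x0, hx0⟩ := hne' S0 hS0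
        have hx0sup : x0 ∈ H.sup := mem_msup.mpr ⟨S0, hS0, hx0⟩
        have := hx x0 hx0sup
        have hpos : 0 < (D.filter fun S => x0 ∈ S).card := this.pos
        obtain ⟨T, hT⟩ := Finset.card_pos.mp hpos
        exact ⟨T, (Finset.mem_filter.mp hT).1⟩
      by_cases h2 : 2 ≤ D.card
      · exact absurd
          ⟨h2, fun S hS => hne S (hDsubF hS), fun x hxD => by
            obtain ⟨S, hSD, hxS⟩ := Finset.mem_sup.mp hxD
            exact hx x (mem_msup.mpr
              ⟨S, Multiset.mem_toFinset.mp (Finset.mem_filter.mp hSD).1, hxS⟩)⟩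
          (hFfree D hDsubF)
      · have h1 : D.card = 1 := by
          have := Finset.card_pos.mpr hDne; omega
        obtain ⟨F₀, hF₀⟩ := Finset.card_eq_one.mp h1
        have hF₀D : F₀ ∈ D := hF₀ ▸ Finset.mem_singleton_self F₀
        obtain ⟨hF₀H, hF₀odd⟩ := Finset.mem_filter.mp hF₀D
        refine ⟨F₀, hDsubF hF₀D, hF₀odd, fun S hSH hSne => ?_⟩
        have hSev : Even (H.count S) := by
          by_contra hOddS
          have : S ∈ D := Finset.mem_filter.mpr
            ⟨Multiset.mem_toFinset.mpr hSH, Nat.not_even_iff_odd.mp hOddS⟩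
          rw [hF₀, Finset.mem_singleton] at this
          exact hSne this
        refine ⟨fun x hxS => ?_, hSev⟩
        have hxsup : x ∈ H.sup := mem_msup.mpr ⟨S, hSH, hxS⟩
        have := hx x hxsup
        rw [hF₀, Finset.filter_singleton] at this
        by_contra hxF₀
        rw [if_neg hxF₀] at this
        simp at this
    · rintro ⟨F₀, hF₀F, hoddc, hrest⟩
      have hF₀H : F₀ ∈ H := Multiset.count_pos.mp hoddc.pos
      have hDeq : D = {F₀} := by
        refine Finset.eq_singleton_iff_unique_mem.mpr
          ⟨Finset.mem_filter.mpr ⟨Multiset.mem_toFinset.mpr hF₀H, hoddc⟩, fun S hS => ?_⟩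
        obtain ⟨hS1, hS2⟩ := Finset.mem_filter.mp hS
        by_contra hSne
        exact (Nat.not_even_iff_odd.mpr hS2)
          ((hrest S (Multiset.mem_toFinset.mp hS1) hSne).2)
      refine ⟨hcard, fun S hS => hne S (hH S hS), fun x hxsup => ?_⟩
      obtain ⟨S, hSH, hxS⟩ := mem_msup.mp hxsup
      have hxF₀ : x ∈ F₀ := by
        by_cases hSF : S = F₀
        · exact hSF ▸ hxS
        · exact (hrest S hSH hSF).1 hxS
      rw [key, hDeq, Finset.filter_singleton, if_pos hxF₀, Finset.card_singleton]
      exact odd_one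
  refine ⟨main, fun heven hOS => ?_⟩
  obtain ⟨F₀, _, hoddc, hrest⟩ := main.mp hOS
  have hF₀H : F₀ ∈ H := Multiset.count_pos.mp hoddc.pos
  have hDeq : D = {F₀} := by
    refine Finset.eq_singleton_iff_unique_mem.mpr
      ⟨Finset.mem_filter.mpr ⟨Multiset.mem_toFinset.mpr hF₀H, hoddc⟩, fun S hS => ?_⟩
    obtain ⟨hS1, hS2⟩ := Finset.mem_filter.mp hS
    by_contra hSne
    exact (Nat.not_even_iff_odd.mpr hS2) ((hrest S (Multiset.mem_toFinset.mp hS1) hSne).2)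
  have hoddcard : Odd (Multiset.card H) := by
    have := (key (fun _ => True)).mpr (by rw [hDeq]; simp : Odd ((D.filter fun _ => True).card))
    rwa [Multiset.countP_True] at this
  exact (Nat.not_odd_iff_even.mpr heven) hoddcard
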